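/- The Demazure–Lusztig operators are well defined and give a representation of the extended affine Hecke algebra relations: (a) for every f ∈ R and 1 ≤ i ≤ n−1, the element (1−q)f − (1 − q·x_{i+1}x_i^{−1})·(s_i f) is divisible by x_{i+1}x_i^{−1} − 1 in R, so T_i f ∈ R; (b) (T_i − q)(T_i + 1) = 0; (c) T_i T_{i+1} T_i = T_{i+1} T_i T_{i+1} and T_i T_j = T_j T_i for |i − j| ≥ 2; (d) X_j X_k = X_k X_j for all j, k, q^{−1} T_i X_i T_i = X_{i+1} for 1 ≤ i ≤ n−1, and T_i X_j = X_j T_i for j ∉ {i, i+1}. -/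

import Mathlib

noncomputable section

/-- The field `ℂ(q)` of rational functions in the indeterminate `q`. -/
abbrev KK : Type := RatFunc ℂ

/-- The ring `R = ℂ(q)[x_1^{±1}, …, x_n^{±1}]` of Laurent polynomials. -/
abbrev RL (n : ℕ) : Type := AddMonoidAlgebra KK (Fin n →₀ ℤ)

/-- The parameter `q`, an indeterminate over `ℂ`. -/
def qK : KK := RatFunc.X

/-- `q` viewed as a constant in the Laurent polynomial ring `R`. -/
def qc (n : ℕ) : RL n := AddMonoidAlgebra.single 0 qK

/-- The monomial `x^μ` for an exponent vector `μ ∈ ℤ^n`. -/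
def xpow (n : ℕ) (μ : Fin n →₀ ℤ) : RL n := AddMonoidAlgebra.single μ 1

/-- The `ℂ(q)`-linear substitution exchanging the variables `x_a` and `x_b`. -/
def sOp {n : ℕ} (a b : Fin n) (f : RL n) : RL n :=
  AddMonoidAlgebra.ofCoeff
    (Finsupp.equivMapDomain (Finsupp.equivCongrLeft (Equiv.swap a b)) f.coeff)

open scoped Classical in
/-- `divBy d a` is a quotient of `a` by `d` when `d ∣ a`, and `0` otherwise. -/
def divBy {n : ℕ} (d a : RL n) : RL n := if h : d ∣ a then h.choose else 0

/-- Exponent vector of `x_b x_a⁻¹`. -/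
def dExp {n : ℕ} (a b : Fin n) : Fin n →₀ ℤ := Finsupp.single b 1 - Finsupp.single a 1

/-- The Demazure–Lusztig operator
`T f = (f − s f)/(x_b x_a⁻¹ − 1) − q·(f − x_b x_a⁻¹·(s f))/(x_b x_a⁻¹ − 1)`
(for `a = i`, `b = i+1` this is `T_i`). -/
def DLop {n : ℕ} (a b : Fin n) (f : RL n) : RL n :=
  divBy (xpow n (dExp a b) - 1)
    ((1 - qc n) * f - (1 - qc n * xpow n (dExp a b)) * sOp a b f)

/-- The operator `X_j`: multiplication by `x_j⁻¹`. -/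
def Xop {n : ℕ} (j : Fin n) (f : RL n) : RL n := xpow n (Finsupp.single j (-1)) * f

end

/- ========================= auxiliary development ========================= -/

noncomputable section HeckeAux

open AddMonoidAlgebra

instance RL.isDomain (n : ℕ) : IsDomain (RL n) := NoZeroDivisors.to_isDomain _

namespace HeckeAux

variable {n : ℕ}

/-! ### abstract field lemmas -/

section AbstractField

variable {F : Type*} [Field F]

/-- Demazure–Lusztig operator in a field, abstractly. -/
def Tf (S : F →+* F) (Q Z f : F) : F := ((1 - Q) * f - (1 - Q * Z) * S f) / (Z - 1)

def Ac (Q Z : F) : F := (1 - Q) / (Z - 1)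
def Bc (Q Z : F) : F := -(1 - Q * Z) / (Z - 1)

lemma Tf_eq (S : F →+* F) (Q Z f : F) : Tf S Q Z f = Ac Q Z * f + Bc Q Z * S f := by
  unfold Tf Ac Bc; ring

lemma map_Ac (S : F →+* F) (Q Z : F) : S (Ac Q Z) = Ac (S Q) (S Z) := by
  simp [Ac, map_div₀]

lemma map_Bc (S : F →+* F) (Q Z : F) : S (Bc Q Z) = Bc (S Q) (S Z) := by
  simp [Bc, map_div₀]

lemma Ac_inv {Q Z : F} (hZ0 : Z ≠ 0) (hZ1 : Z ≠ 1) : Ac Q Z⁻¹ = -(Z * Ac Q Z) := by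
  have h1 : Z - 1 ≠ 0 := sub_ne_zero.mpr hZ1
  have h2 : Z⁻¹ - 1 ≠ 0 := sub_ne_zero.mpr (fun h => hZ1 (by rw [← inv_inv Z, h, inv_one]))
  have h3 : (1:F) - Z ≠ 0 := sub_ne_zero.mpr hZ1.symm
  have h4 : (1:F) - Z⁻¹ ≠ 0 := sub_ne_zero.mpr (fun h => h2 (by rw [← h]; ring))
  unfold Ac; field_simp; ring

lemma Bc_inv {Q Z : F} (hZ0 : Z ≠ 0) (hZ1 : Z ≠ 1) : Bc Q Z⁻¹ = (Z - Q) / (Z - 1) := by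
  have h1 : Z - 1 ≠ 0 := sub_ne_zero.mpr hZ1
  have h2 : Z⁻¹ - 1 ≠ 0 := sub_ne_zero.mpr (fun h => hZ1 (by rw [← inv_inv Z, h, inv_one]))
  have h3 : (1:F) - Z ≠ 0 := sub_ne_zero.mpr hZ1.symm
  have h4 : (1:F) - Z⁻¹ ≠ 0 := sub_ne_zero.mpr (fun h => h2 (by rw [← h]; ring))
  unfold Bc; field_simp; ring

lemma quad_abs (S : F →+* F) (Q Z f : F) (hZ0 : Z ≠ 0) (hZ1 : Z ≠ 1)
    (hQ : S Q = Q) (hZ : S Z = Z⁻¹) (hff : S (S f) = f) :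
    Tf S Q Z (Tf S Q Z f + f) - Q * (Tf S Q Z f + f) = 0 := by
  have h1 : Z - 1 ≠ 0 := sub_ne_zero.mpr hZ1
  have h2 : Z⁻¹ - 1 ≠ 0 := sub_ne_zero.mpr (fun h => hZ1 (by rw [← inv_inv Z, h, inv_one]))
  have h3 : (1:F) - Z ≠ 0 := sub_ne_zero.mpr hZ1.symm
  have h4 : (1:F) - Z⁻¹ ≠ 0 := sub_ne_zero.mpr (fun h => h2 (by rw [← h]; ring))
  simp only [Tf, map_div₀, map_sub, map_mul, map_one, map_add, hQ, hZ, hff]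
  field_simp
  ring

set_option maxHeartbeats 1000000 in
lemma braid_abs (S T : F →+* F) (Q U V f : F)
    (hU0 : U ≠ 0) (hU1 : U ≠ 1) (hV0 : V ≠ 0) (hV1 : V ≠ 1) (hUV : U * V ≠ 1)
    (hSQ : S Q = Q) (hTQ : T Q = Q)
    (hSU : S U = U⁻¹) (hTV : T V = V⁻¹) (hSV : S V = U * V) (hTU : T U = U * V)
    (hSSf : S (S f) = f) (hTTf : T (T f) = f)
    (hbr : T (S (T f)) = S (T (S f))) :
    Tf S Q U (Tf T Q V (Tf S Q U f)) = Tf T Q V (Tf S Q U (Tf T Q V f)) := by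
  have hu1 : U - 1 ≠ 0 := sub_ne_zero.mpr hU1
  have hv1 : V - 1 ≠ 0 := sub_ne_zero.mpr hV1
  have huv1 : U * V - 1 ≠ 0 := sub_ne_zero.mpr hUV
  have hSUV : S (U * V) = V := by rw [map_mul, hSU, hSV, inv_mul_cancel_left₀ hU0]
  have hTUV : T (U * V) = U := by rw [map_mul, hTU, hTV, mul_inv_cancel_right₀ hV0]
  have h1 : Ac Q U * Ac Q V * Ac Q U + Bc Q U * Ac Q (U*V) * Bc Q U⁻¹
      = Ac Q V * Ac Q U * Ac Q V + Bc Q V * Ac Q (U*V) * Bc Q V⁻¹ := by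
    rw [Bc_inv hU0 hU1, Bc_inv hV0 hV1]; unfold Ac Bc; field_simp; ring
  have h2 : Ac Q U * Ac Q V * Bc Q U + Bc Q U * Ac Q (U*V) * Ac Q U⁻¹
      = Ac Q V * Bc Q U * Ac Q (U*V) := by
    rw [Ac_inv hU0 hU1]; unfold Ac Bc; field_simp; ring
  have h3 : Ac Q U * Bc Q V * Ac Q (U*V)
      = Ac Q V * Ac Q U * Bc Q V + Bc Q V * Ac Q (U*V) * Ac Q V⁻¹ := by
    rw [Ac_inv hV0 hV1]; unfold Ac Bc; field_simp; ring
  simp only [Tf_eq, map_add, map_mul, map_Ac, map_Bc, hSQ, hTQ, hSU, hTV, hSV, hTU,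
    hSUV, hTUV, hSSf, hTTf, hbr]
  linear_combination h1 * f + h2 * (S f) + h3 * (T f)

lemma comm_abs (S T : F →+* F) (Q U V f : F)
    (hSQ : S Q = Q) (hTQ : T Q = Q) (hSV : S V = V) (hTU : T U = U)
    (hST : S (T f) = T (S f)) :
    Tf S Q U (Tf T Q V f) = Tf T Q V (Tf S Q U f) := by
  simp only [Tf, map_div₀, map_sub, map_mul, map_one, hSQ, hTQ, hSV, hTU, hST]
  ring

lemma xrel_abs (S : F →+* F) (Q U M f : F)
    (hU0 : U ≠ 0) (hU1 : U ≠ 1)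
    (hSQ : S Q = Q) (hSU : S U = U⁻¹) (hSM : S M = M * U⁻¹) (hSSf : S (S f) = f) :
    Tf S Q U (M * Tf S Q U f) = Q * (M * U⁻¹ * f) := by
  have hu1 : U - 1 ≠ 0 := sub_ne_zero.mpr hU1
  have hui : U⁻¹ - 1 ≠ 0 := sub_ne_zero.mpr (fun h => hU1 (by rw [← inv_inv U, h, inv_one]))
  have h3 : (1:F) - U ≠ 0 := sub_ne_zero.mpr hU1.symm
  have h4 : (1:F) - U⁻¹ ≠ 0 := sub_ne_zero.mpr (fun h => hui (by rw [← h]; ring))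
  simp only [Tf, map_div₀, map_sub, map_mul, map_one, hSQ, hSU, hSM, hSSf]
  field_simp
  ring

lemma xcomm_abs (S : F →+* F) (Q U M f : F) (hSM : S M = M) :
    Tf S Q U (M * f) = M * Tf S Q U f := by
  simp only [Tf, map_mul, hSM]; ring

end AbstractField

/-! ### basic facts about `RL n` -/

lemma xpow_mul (μ ν : Fin n →₀ ℤ) : xpow n μ * xpow n ν = xpow n (μ + ν) := by
  simp [xpow, AddMonoidAlgebra.single_mul_single]

lemma xpow_zero : xpow n 0 = 1 := rfl

lemma xpow_ne_zero (μ : Fin n →₀ ℤ) : xpow n μ ≠ 0 := by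
  simpa [xpow] using Finsupp.single_ne_zero.mpr (one_ne_zero (α := KK))

lemma xpow_ne_one {μ : Fin n →₀ ℤ} (hμ : μ ≠ 0) : xpow n μ ≠ 1 := by
  intro h
  rw [xpow, AddMonoidAlgebra.one_def] at h
  rcases AddMonoidAlgebra.single_inj.mp h with ⟨h1, _⟩ | ⟨h1, _⟩
  · exact hμ h1
  · exact one_ne_zero h1

lemma divBy_eq {d a c : RL n} (hd : d ≠ 0) (h : a = d * c) : divBy d a = c := by
  have hdvd : d ∣ a := ⟨c, h⟩
  rw [divBy, dif_pos hdvd]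
  exact mul_left_cancel₀ hd (by rw [← hdvd.choose_spec, ← h])

/-! ### the swap substitution -/

/-- The swap of exponents as an additive equivalence. -/
def wS (a b : Fin n) : (Fin n →₀ ℤ) ≃+ (Fin n →₀ ℤ) := Finsupp.domCongr (Equiv.swap a b)

lemma wS_single (a b j : Fin n) (m : ℤ) :
    wS a b (Finsupp.single j m) = Finsupp.single (Equiv.swap a b j) m := by
  simp [wS, Finsupp.domCongr_apply, Finsupp.equivMapDomain_single]

/-- `sOp` as an algebra equivalence. -/
def sAlg (a b : Fin n) : RL n ≃ₐ[KK] RL n :=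
  AddMonoidAlgebra.domCongr KK KK (Finsupp.domCongr (Equiv.swap a b))

lemma sOp_eq (a b : Fin n) : sOp a b = ⇑(sAlg a b) := by
  funext f; apply AddMonoidAlgebra.ext; ext m
  simp [sOp, sAlg, Finsupp.equivMapDomain_apply]

lemma sOp_single (a b : Fin n) (μ : Fin n →₀ ℤ) (c : KK) :
    sOp a b (AddMonoidAlgebra.single μ c) = AddMonoidAlgebra.single (wS a b μ) c := by
  rw [sOp_eq, sAlg]
  exact AddMonoidAlgebra.domCongr_single _ _ _

lemma sOp_qc (a b : Fin n) : sOp a b (qc n) = qc n := by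
  rw [qc, sOp_single, map_zero]

lemma sOp_xpow (a b : Fin n) (μ : Fin n →₀ ℤ) :
    sOp a b (xpow n μ) = xpow n (wS a b μ) := by
  rw [xpow, sOp_single, xpow]

lemma wS_dExp (a b c d : Fin n) :
    wS a b (dExp c d) = dExp (Equiv.swap a b c) (Equiv.swap a b d) := by
  rw [dExp, map_sub, wS_single, wS_single, dExp]

lemma sAlg_symm (a b : Fin n) : (sAlg a b).symm = sAlg a b := by
  rw [sAlg, AddMonoidAlgebra.domCongr_symm, Finsupp.domCongr_symm, Equiv.symm_swap]

lemma sOp_sOp (a b : Fin n) (f : RL n) : sOp a b (sOp a b f) = f := by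
  rw [sOp_eq]
  conv_lhs => rw [show sAlg a b ((sAlg a b) f) = (sAlg a b).symm ((sAlg a b) f) by
    rw [sAlg_symm]]
  exact (sAlg a b).symm_apply_apply f

lemma sOp_comp (a b c d : Fin n) (f : RL n) :
    sOp a b (sOp c d f)
      = AddMonoidAlgebra.ofCoeff (Finsupp.equivMapDomain
          (Finsupp.equivCongrLeft ((Equiv.swap c d).trans (Equiv.swap a b))) f.coeff) := by
  rw [sOp, sOp, AddMonoidAlgebra.coeff_ofCoeff, ← Finsupp.equivMapDomain_trans]
  congr 2
  exact Equiv.ext fun l => (Finsupp.equivMapDomain_trans _ _ l).symm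

/-! ### permutation identities -/

lemma swap_braid {a b c : Fin n} (hab : a ≠ b) (hac : a ≠ c) (hbc : b ≠ c) :
    ((Equiv.swap a b).trans (Equiv.swap b c)).trans (Equiv.swap a b)
      = ((Equiv.swap b c).trans (Equiv.swap a b)).trans (Equiv.swap b c) := by
  refine Equiv.ext fun x => ?_
  simp only [Equiv.trans_apply]
  rcases eq_or_ne x a with rfl | hxa <;> rcases eq_or_ne x b with rfl | hxb <;>
    rcases eq_or_ne x c with rfl | hxc <;>
    simp_all [Equiv.swap_apply_of_ne_of_ne, Equiv.swap_apply_left, Equiv.swap_apply_right,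
      hab.symm, hac.symm, hbc.symm]

lemma swap_disj {a b c d : Fin n} (hca : c ≠ a) (hcb : c ≠ b) (hda : d ≠ a) (hdb : d ≠ b) :
    (Equiv.swap a b).trans (Equiv.swap c d) = (Equiv.swap c d).trans (Equiv.swap a b) := by
  refine Equiv.ext fun x => ?_
  simp only [Equiv.trans_apply]
  rcases eq_or_ne x a with rfl | hxa <;> rcases eq_or_ne x b with rfl | hxb <;>
    rcases eq_or_ne x c with rfl | hxc <;> rcases eq_or_ne x d with rfl | hxd <;>
    simp_all [Equiv.swap_apply_of_ne_of_ne, Equiv.swap_apply_left, Equiv.swap_apply_right,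
      hca.symm, hcb.symm, hda.symm, hdb.symm]

/-- Substitution along an arbitrary permutation of the variables. -/
def Ew (e : Equiv.Perm (Fin n)) (f : RL n) : RL n :=
  AddMonoidAlgebra.ofCoeff (Finsupp.equivMapDomain (Finsupp.equivCongrLeft e) f.coeff)

lemma sOp_eq_Ew (a b : Fin n) (f : RL n) : sOp a b f = Ew (Equiv.swap a b) f := rfl

lemma sOp_Ew (a b : Fin n) (e : Equiv.Perm (Fin n)) (f : RL n) :
    sOp a b (Ew e f) = Ew (e.trans (Equiv.swap a b)) f := by
  rw [sOp, Ew, Ew, AddMonoidAlgebra.coeff_ofCoeff, ← Finsupp.equivMapDomain_trans]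
  congr 2
  exact Equiv.ext fun l => (Finsupp.equivMapDomain_trans _ _ l).symm

lemma sOp_braid {a b c : Fin n} (hab : a ≠ b) (hac : a ≠ c) (hbc : b ≠ c) (f : RL n) :
    sOp a b (sOp b c (sOp a b f)) = sOp b c (sOp a b (sOp b c f)) := by
  rw [sOp_eq_Ew a b f, sOp_Ew, sOp_Ew, sOp_eq_Ew b c f, sOp_Ew, sOp_Ew,
    swap_braid hab hac hbc]

lemma sOp_comm {a b c d : Fin n} (hca : c ≠ a) (hcb : c ≠ b) (hda : d ≠ a) (hdb : d ≠ b)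
    (f : RL n) : sOp a b (sOp c d f) = sOp c d (sOp a b f) := by
  rw [sOp_eq_Ew c d f, sOp_Ew, sOp_eq_Ew a b f, sOp_Ew, swap_disj hca hcb hda hdb]

/-! ### divisibility (part (a)) -/

lemma xpow_nsmul_sub_one_dvd (d : Fin n →₀ ℤ) (m : ℕ) :
    (xpow n d - 1) ∣ (xpow n ((m : ℤ) • d) - 1) := by
  induction m with
  | zero =>
      rw [show ((0 : ℕ) : ℤ) • d = 0 by simp, xpow_zero, sub_self]
      exact dvd_zero _
  | succ k ih =>
      have h1 : ((k + 1 : ℕ) : ℤ) • d = (k : ℤ) • d + d := by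
        push_cast; rw [add_smul, one_smul]
      have h2 : xpow n ((k : ℤ) • d) * xpow n d - 1
          = xpow n ((k : ℤ) • d) * (xpow n d - 1) + (xpow n ((k : ℤ) • d) - 1) := by ring
      rw [h1, ← xpow_mul, h2]
      exact dvd_add (dvd_mul_left _ _) ih

lemma xpow_zsmul_sub_one_dvd (d : Fin n →₀ ℤ) (k : ℤ) :
    (xpow n d - 1) ∣ (xpow n (k • d) - 1) := by
  rcases Int.eq_nat_or_neg k with ⟨m, rfl | rfl⟩
  · exact xpow_nsmul_sub_one_dvd d m
  · have h := xpow_nsmul_sub_one_dvd d m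
    have hx : xpow n ((-(m : ℤ)) • d) * xpow n ((m : ℤ) • d) = 1 := by
      rw [xpow_mul, ← add_smul, neg_add_cancel, zero_smul, xpow_zero]
    have h2 : xpow n ((-(m : ℤ)) • d) - 1
        = -(xpow n ((-(m : ℤ)) • d)) * (xpow n ((m : ℤ) • d) - 1) := by
      linear_combination hx
    rw [h2]
    exact h.mul_left _

lemma wS_eq {a b : Fin n} (hab : a ≠ b) (μ : Fin n →₀ ℤ) :
    wS a b μ = μ + (μ a - μ b) • dExp a b := by
  ext x
  rw [wS, Finsupp.domCongr_apply, Finsupp.equivMapDomain_apply, Equiv.symm_swap]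
  rw [Finsupp.add_apply, Finsupp.smul_apply, dExp, Finsupp.sub_apply, smul_eq_mul]
  rcases eq_or_ne x a with rfl | hxa
  · rw [Equiv.swap_apply_left]
    simp [Finsupp.single_apply, hab.symm]
  rcases eq_or_ne x b with rfl | hxb
  · rw [Equiv.swap_apply_right]
    simp [Finsupp.single_apply, hab]
  · rw [Equiv.swap_apply_of_ne_of_ne hxa hxb]
    simp [Finsupp.single_apply, Ne.symm hxa, Ne.symm hxb]

lemma numer_dvd_single (a b : Fin n) (hab : a ≠ b) (μ : Fin n →₀ ℤ) (c : KK) :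
    (xpow n (dExp a b) - 1) ∣
      ((1 - qc n) * AddMonoidAlgebra.single μ c
        - (1 - qc n * xpow n (dExp a b)) * sOp a b (AddMonoidAlgebra.single μ c)) := by
  set k := μ a - μ b with hk
  have h1 : sOp a b (AddMonoidAlgebra.single μ c)
      = AddMonoidAlgebra.single μ c * xpow n (k • dExp a b) := by
    rw [sOp_single, wS_eq hab, xpow, AddMonoidAlgebra.single_mul_single, mul_one]
  have hZW : xpow n (dExp a b) * xpow n (k • dExp a b) = xpow n ((k + 1) • dExp a b) := by
    rw [xpow_mul, add_smul, one_smul, add_comm]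
  have expand : (1 - qc n) * (AddMonoidAlgebra.single μ c)
        - (1 - qc n * xpow n (dExp a b)) * (AddMonoidAlgebra.single μ c * xpow n (k • dExp a b))
      = AddMonoidAlgebra.single μ c
          * (qc n * (xpow n ((k + 1) • dExp a b) - 1) - (xpow n (k • dExp a b) - 1)) := by
    rw [← hZW]; ring
  rw [h1, expand]
  exact ((dvd_sub ((xpow_zsmul_sub_one_dvd _ _).mul_left _)
    (xpow_zsmul_sub_one_dvd _ _))).mul_left _

lemma numer_dvd (a b : Fin n) (hab : a ≠ b) (f : RL n) :
    (xpow n (dExp a b) - 1) ∣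
      ((1 - qc n) * f - (1 - qc n * xpow n (dExp a b)) * sOp a b f) := by
  induction f using AddMonoidAlgebra.induction_on with
  | of g =>
      rw [AddMonoidAlgebra.of_apply]
      exact numer_dvd_single a b hab _ 1
  | add f g hf hg =>
      have hadd' : (1 - qc n) * (f + g)
            - (1 - qc n * xpow n (dExp a b)) * sOp a b (f + g)
          = ((1 - qc n) * f - (1 - qc n * xpow n (dExp a b)) * sOp a b f)
            + ((1 - qc n) * g - (1 - qc n * xpow n (dExp a b)) * sOp a b g) := by
        rw [sOp_eq, map_add]; ring
      rw [hadd']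
      exact dvd_add hf hg
  | smul r f hf =>
      have hs : sOp a b (r • f) = r • sOp a b f := by
        rw [sOp_eq, map_smul]
      have hsm : (1 - qc n) * (r • f)
            - (1 - qc n * xpow n (dExp a b)) * sOp a b (r • f)
          = r • ((1 - qc n) * f - (1 - qc n * xpow n (dExp a b)) * sOp a b f) := by
        rw [hs, mul_smul_comm, mul_smul_comm, smul_sub]
      rw [hsm]
      obtain ⟨c, hc⟩ := hf
      exact ⟨r • c, by rw [hc, mul_smul_comm]⟩

/-! ### the fraction field -/

abbrev FF (n : ℕ) : Type _ := FractionRing (RL n)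

def ι : RL n →+* FF n := algebraMap _ _

lemma ι_inj : Function.Injective (ι (n := n)) := IsFractionRing.injective _ _

def Shat (a b : Fin n) : FF n →+* FF n :=
  ((IsFractionRing.ringEquivOfRingEquiv (sAlg a b).toRingEquiv : FF n ≃+* FF n) : FF n →+* FF n)

lemma Shat_ι (a b : Fin n) (f : RL n) : Shat a b (ι f) = ι (sOp a b f) := by
  rw [sOp_eq]
  exact IsFractionRing.ringEquivOfRingEquiv_algebraMap _ _

lemma dExp_ne_zero {a b : Fin n} (hab : a ≠ b) : dExp a b ≠ 0 := by
  intro h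
  have hb : dExp a b b = 1 := by
    simp [dExp, Finsupp.single_apply, hab]
  rw [h] at hb
  simp at hb

lemma iota_xpow_ne_zero (μ : Fin n →₀ ℤ) : ι (xpow n μ) ≠ 0 :=
  (map_ne_zero_iff ι ι_inj).mpr (xpow_ne_zero μ)

lemma iota_xpow_ne_one {μ : Fin n →₀ ℤ} (hμ : μ ≠ 0) : ι (xpow n μ) ≠ 1 := by
  intro h
  exact xpow_ne_one hμ (ι_inj (by rw [h, map_one]))

lemma iota_xpow_neg (μ : Fin n →₀ ℤ) : ι (xpow n (-μ)) = (ι (xpow n μ))⁻¹ :=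
  eq_inv_of_mul_eq_one_left (by rw [← map_mul, xpow_mul, neg_add_cancel, xpow_zero, map_one])

/-- Master formula: the image of `DLop` in the fraction field. -/
lemma iota_DLop (a b : Fin n) (hab : a ≠ b) (f : RL n) :
    ι (DLop a b f) = Tf (Shat a b) (ι (qc n)) (ι (xpow n (dExp a b))) (ι f) := by
  obtain ⟨c, hc⟩ := numer_dvd a b hab f
  have hd0 : xpow n (dExp a b) - 1 ≠ 0 :=
    sub_ne_zero.mpr (xpow_ne_one (dExp_ne_zero hab))
  have hι : ι (xpow n (dExp a b)) - 1 ≠ 0 :=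
    sub_ne_zero.mpr (iota_xpow_ne_one (dExp_ne_zero hab))
  rw [DLop, divBy_eq hd0 hc, Tf, eq_div_iff hι, Shat_ι]
  have hcι := congrArg ι hc
  simp only [map_sub, map_mul, map_one] at hcι
  linear_combination -hcι

/-! ### the relations, for general pairs of distinct indices -/

lemma Shat_qc (a b : Fin n) : Shat a b (ι (qc n)) = ι (qc n) := by
  rw [Shat_ι, sOp_qc]

lemma dExp_swap (a b : Fin n) : dExp b a = -dExp a b := by
  rw [dExp, dExp, neg_sub]

lemma Shat_Z (a b : Fin n) :
    Shat a b (ι (xpow n (dExp a b))) = (ι (xpow n (dExp a b)))⁻¹ := by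
  rw [Shat_ι, sOp_xpow, wS_dExp, Equiv.swap_apply_left, Equiv.swap_apply_right,
    dExp_swap, iota_xpow_neg]

lemma Shat_Shat (a b : Fin n) (f : RL n) :
    Shat a b (Shat a b (ι f)) = ι f := by
  rw [Shat_ι, Shat_ι, sOp_sOp]

lemma quad_rel (a b : Fin n) (hab : a ≠ b) (f : RL n) :
    DLop a b (DLop a b f + f) - qc n * (DLop a b f + f) = 0 := by
  apply ι_inj
  rw [map_zero, map_sub, map_mul, map_add, iota_DLop a b hab, iota_DLop a b hab, map_add,
    iota_DLop a b hab]
  exact quad_abs _ _ _ _ (iota_xpow_ne_zero _) (iota_xpow_ne_one (dExp_ne_zero hab))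
    (Shat_qc a b) (Shat_Z a b) (Shat_Shat a b f)

lemma dExp_add (a b c : Fin n) : dExp a b + dExp b c = dExp a c := by
  rw [dExp, dExp, dExp]; abel

lemma braid_rel (a b c : Fin n) (hab : a ≠ b) (hac : a ≠ c) (hbc : b ≠ c) (f : RL n) :
    DLop a b (DLop b c (DLop a b f)) = DLop b c (DLop a b (DLop b c f)) := by
  apply ι_inj
  simp only [iota_DLop a b hab, iota_DLop b c hbc]
  have hUV : ι (xpow n (dExp a b)) * ι (xpow n (dExp b c)) = ι (xpow n (dExp a c)) := by
    rw [← map_mul, xpow_mul, dExp_add]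
  refine braid_abs _ _ _ _ _ _ (iota_xpow_ne_zero _) (iota_xpow_ne_one (dExp_ne_zero hab))
    (iota_xpow_ne_zero _) (iota_xpow_ne_one (dExp_ne_zero hbc))
    (by rw [hUV]; exact iota_xpow_ne_one (dExp_ne_zero hac))
    (Shat_qc a b) (Shat_qc b c) (Shat_Z a b) (Shat_Z b c) ?_ ?_
    (Shat_Shat a b f) (Shat_Shat b c f) ?_
  · rw [Shat_ι, sOp_xpow, wS_dExp, Equiv.swap_apply_right,
      Equiv.swap_apply_of_ne_of_ne hac.symm hbc.symm, ← dExp_add a b c, ← xpow_mul, map_mul]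
  · rw [Shat_ι, sOp_xpow, wS_dExp, Equiv.swap_apply_of_ne_of_ne hab hac,
      Equiv.swap_apply_left, ← dExp_add a b c, ← xpow_mul, map_mul]
  · rw [Shat_ι, Shat_ι, Shat_ι, Shat_ι, Shat_ι, Shat_ι,
      (sOp_braid hab hac hbc f).symm]

lemma comm_rel (a b c d : Fin n) (hab : a ≠ b) (hcd : c ≠ d)
    (hca : c ≠ a) (hcb : c ≠ b) (hda : d ≠ a) (hdb : d ≠ b) (f : RL n) :
    DLop a b (DLop c d f) = DLop c d (DLop a b f) := by
  apply ι_inj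
  simp only [iota_DLop a b hab, iota_DLop c d hcd]
  refine comm_abs _ _ _ _ _ _ (Shat_qc a b) (Shat_qc c d) ?_ ?_ ?_
  · rw [Shat_ι, sOp_xpow, wS_dExp, Equiv.swap_apply_of_ne_of_ne hca hcb,
      Equiv.swap_apply_of_ne_of_ne hda hdb]
  · rw [Shat_ι, sOp_xpow, wS_dExp, Equiv.swap_apply_of_ne_of_ne hca.symm hda.symm,
      Equiv.swap_apply_of_ne_of_ne hcb.symm hdb.symm]
  · rw [Shat_ι, Shat_ι, Shat_ι, Shat_ι, sOp_comm hca hcb hda hdb]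

lemma single_exp (a b : Fin n) :
    Finsupp.single a (-1 : ℤ) + -dExp a b = Finsupp.single b (-1 : ℤ) := by
  rw [dExp, show Finsupp.single a (-1 : ℤ) = -Finsupp.single a 1 from by
      rw [Finsupp.single_neg],
    show Finsupp.single b (-1 : ℤ) = -Finsupp.single b 1 from by
      rw [Finsupp.single_neg]]
  abel

lemma xrel_rel (a b : Fin n) (hab : a ≠ b) (f : RL n) :
    DLop a b (Xop a (DLop a b f)) = qc n * Xop b f := by
  apply ι_inj
  have hM : ι (xpow n (Finsupp.single a (-1 : ℤ))) * (ι (xpow n (dExp a b)))⁻¹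
      = ι (xpow n (Finsupp.single b (-1 : ℤ))) := by
    rw [← iota_xpow_neg, ← map_mul, xpow_mul, single_exp]
  rw [iota_DLop a b hab, Xop, map_mul, iota_DLop a b hab, map_mul, Xop, map_mul]
  rw [xrel_abs _ _ _ _ _ (iota_xpow_ne_zero _) (iota_xpow_ne_one (dExp_ne_zero hab))
    (Shat_qc a b) (Shat_Z a b) ?_ (Shat_Shat a b f)]
  · rw [← hM]
  · rw [Shat_ι, sOp_xpow, wS_single, Equiv.swap_apply_left, ← hM]

lemma xcomm_rel (a b j : Fin n) (hab : a ≠ b) (hja : j ≠ a) (hjb : j ≠ b) (f : RL n) :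
    DLop a b (Xop j f) = Xop j (DLop a b f) := by
  apply ι_inj
  rw [iota_DLop a b hab, Xop, map_mul, Xop, map_mul, iota_DLop a b hab]
  exact xcomm_abs _ _ _ _ _
    (by rw [Shat_ι, sOp_xpow, wS_single, Equiv.swap_apply_of_ne_of_ne hja hjb])

end HeckeAux

end HeckeAux

/-- Statement 10: the Demazure–Lusztig operators are well defined ((a): divisibility) and
satisfy the defining relations of the extended affine Hecke algebra `H_n` of `GL_n`:
(b) the quadratic relation, (c) the braid relations, (d) the relations involving the
`X_j`'s. -/
theorem demazure_lusztig_hecke_relations (n : ℕ) (hn : 1 ≤ n) :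
    -- (a) well-definedness: the numerator of `T_i f` is divisible by `x_{i+1}x_i⁻¹ − 1`
    (∀ (i : ℕ) (hi : i + 1 < n) (f : RL n),
      (xpow n (dExp (⟨i, by omega⟩ : Fin n) ⟨i + 1, hi⟩) - 1) ∣
        ((1 - qc n) * f -
          (1 - qc n * xpow n (dExp (⟨i, by omega⟩ : Fin n) ⟨i + 1, hi⟩)) *
            sOp (⟨i, by omega⟩ : Fin n) ⟨i + 1, hi⟩ f))
    -- (b) `(T_i − q)(T_i + 1) = 0`
    ∧ (∀ (i : ℕ) (hi : i + 1 < n) (f : RL n),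
        DLop (⟨i, by omega⟩ : Fin n) ⟨i + 1, hi⟩
            (DLop (⟨i, by omega⟩ : Fin n) ⟨i + 1, hi⟩ f + f)
          - qc n * (DLop (⟨i, by omega⟩ : Fin n) ⟨i + 1, hi⟩ f + f) = 0)
    -- (c) braid relations
    ∧ (∀ (i : ℕ) (hi : i + 2 < n) (f : RL n),
        DLop (⟨i, by omega⟩ : Fin n) ⟨i + 1, by omega⟩
            (DLop (⟨i + 1, by omega⟩ : Fin n) ⟨i + 2, hi⟩
              (DLop (⟨i, by omega⟩ : Fin n) ⟨i + 1, by omega⟩ f))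
          = DLop (⟨i + 1, by omega⟩ : Fin n) ⟨i + 2, hi⟩
              (DLop (⟨i, by omega⟩ : Fin n) ⟨i + 1, by omega⟩
                (DLop (⟨i + 1, by omega⟩ : Fin n) ⟨i + 2, hi⟩ f)))
    ∧ (∀ (i j : ℕ) (hi : i + 1 < n) (hj : j + 1 < n), i + 2 ≤ j → ∀ f : RL n,
        DLop (⟨i, by omega⟩ : Fin n) ⟨i + 1, hi⟩
            (DLop (⟨j, by omega⟩ : Fin n) ⟨j + 1, hj⟩ f)
          = DLop (⟨j, by omega⟩ : Fin n) ⟨j + 1, hj⟩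
              (DLop (⟨i, by omega⟩ : Fin n) ⟨i + 1, hi⟩ f))
    -- (d) relations with the `X_j`
    ∧ (∀ (j k : Fin n) (f : RL n), Xop j (Xop k f) = Xop k (Xop j f))
    ∧ (∀ (i : ℕ) (hi : i + 1 < n) (f : RL n),
        DLop (⟨i, by omega⟩ : Fin n) ⟨i + 1, hi⟩
            (Xop (⟨i, by omega⟩ : Fin n)
              (DLop (⟨i, by omega⟩ : Fin n) ⟨i + 1, hi⟩ f))
          = qc n * Xop (⟨i + 1, hi⟩ : Fin n) f)
    ∧ (∀ (i : ℕ) (hi : i + 1 < n) (j : Fin n), (j : ℕ) ≠ i → (j : ℕ) ≠ i + 1 →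
        ∀ f : RL n,
          DLop (⟨i, by omega⟩ : Fin n) ⟨i + 1, hi⟩ (Xop j f)
            = Xop j (DLop (⟨i, by omega⟩ : Fin n) ⟨i + 1, hi⟩ f)) := by
  refine ⟨?_, ?_, ?_, ?_, ?_, ?_, ?_⟩
  · intro i hi f
    exact HeckeAux.numer_dvd _ _ (Fin.ne_of_val_ne (show i ≠ i + 1 by omega)) f
  · intro i hi f
    exact HeckeAux.quad_rel _ _ (Fin.ne_of_val_ne (show i ≠ i + 1 by omega)) f
  · intro i hi f
    exact HeckeAux.braid_rel _ _ _ (Fin.ne_of_val_ne (show i ≠ i + 1 by omega))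
      (Fin.ne_of_val_ne (show i ≠ i + 2 by omega))
      (Fin.ne_of_val_ne (show i + 1 ≠ i + 2 by omega)) f
  · intro i j hi hj hij f
    exact HeckeAux.comm_rel _ _ _ _ (Fin.ne_of_val_ne (show i ≠ i + 1 by omega))
      (Fin.ne_of_val_ne (show j ≠ j + 1 by omega))
      (Fin.ne_of_val_ne (show j ≠ i by omega))
      (Fin.ne_of_val_ne (show j ≠ i + 1 by omega))
      (Fin.ne_of_val_ne (show j + 1 ≠ i by omega))
      (Fin.ne_of_val_ne (show j + 1 ≠ i + 1 by omega)) f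
  · intro j k f
    simp only [Xop, mul_left_comm]
  · intro i hi f
    exact HeckeAux.xrel_rel _ _ (Fin.ne_of_val_ne (show i ≠ i + 1 by omega)) f
  · intro i hi j hj1 hj2 f
    exact HeckeAux.xcomm_rel _ _ _ (Fin.ne_of_val_ne (show i ≠ i + 1 by omega))
      (Fin.ne_of_val_ne hj1) (Fin.ne_of_val_ne hj2) f
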